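/- Let μ > 0 and define the dispersion function ω(ξ) = sqrt(|ξ| * tanh(sqrt(μ)*|ξ|)) for ξ ∈ ℝ^d. Then for all ξ₁, ξ₂ ∈ ℝ^d with ξ₁ ≠ 0, ξ₂ ≠ 0, and ξ₁ + ξ₂ ≠ 0, one has ω(ξ₁ + ξ₂) < ω(ξ₁) + ω(ξ₂). -/

import Mathlib

open Real

lemma my_tanh_pos {x : ℝ} (hx : 0 < x) : 0 < Real.tanh x := by
  rw [Real.tanh_eq_sinh_div_cosh]
  exact div_pos (Real.sinh_pos_iff.2 hx) (Real.cosh_pos x)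

lemma my_tanh_le_tanh {x y : ℝ} (h : x ≤ y) : Real.tanh x ≤ Real.tanh y := by
  rw [Real.tanh_eq_sinh_div_cosh, Real.tanh_eq_sinh_div_cosh,
    div_le_div_iff₀ (Real.cosh_pos x) (Real.cosh_pos y)]
  nlinarith [Real.sinh_sub y x, Real.sinh_nonneg_iff.2 (sub_nonneg.2 h),
    Real.cosh_pos x, Real.cosh_pos y]

lemma my_tanh_hasDerivAt (x : ℝ) : HasDerivAt Real.tanh (1 / Real.cosh x ^ 2) x := by
  have h := (Real.hasDerivAt_sinh x).div (Real.hasDerivAt_cosh x) (Real.cosh_pos x).ne'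
  have he : Real.tanh = fun y => Real.sinh y / Real.cosh y :=
    funext fun y => Real.tanh_eq_sinh_div_cosh y
  rw [he]
  refine HasDerivAt.congr_deriv h ?_
  have := Real.cosh_sq_sub_sinh_sq x
  field_simp
  nlinarith [this]

lemma my_phi_anti : StrictAntiOn (fun s : ℝ => Real.tanh s / s) (Set.Ioi 0) := by
  apply StrictAntiOn.mono (s := Set.Ioi (0:ℝ)) ?_ le_rfl
  have : StrictAntiOn (fun s : ℝ => Real.tanh s / s) (Set.Ioi 0) := by
    apply strictAntiOn_of_deriv_neg (convex_Ioi 0)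
    · have hct : Continuous Real.tanh := by
        have he : Real.tanh = fun y => Real.sinh y / Real.cosh y :=
          funext fun y => Real.tanh_eq_sinh_div_cosh y
        rw [he]
        exact Real.continuous_sinh.div Real.continuous_cosh fun x => (Real.cosh_pos x).ne'
      exact hct.continuousOn.div continuousOn_id fun x hx => ne_of_gt hx
    · intro x hx
      rw [interior_Ioi] at hx
      have hx0 : (0:ℝ) < x := hx
      have hd : HasDerivAt (fun s : ℝ => Real.tanh s / s)
          ((1 / Real.cosh x ^ 2 * x - Real.tanh x * 1) / x ^ 2) x :=
        (my_tanh_hasDerivAt x).div (hasDerivAt_id x) hx0.ne'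
      rw [hd.deriv]
      apply div_neg_of_neg_of_pos _ (by positivity)
      have hcx := Real.cosh_pos x
      have h1 : x < Real.sinh x := Real.self_lt_sinh_iff.2 hx0
      have h2 : 1 ≤ Real.cosh x := Real.one_le_cosh x
      have key : 1 / Real.cosh x ^ 2 * x < Real.tanh x := by
        rw [Real.tanh_eq_sinh_div_cosh, one_div, inv_mul_eq_div,
          div_lt_div_iff₀ (by positivity) hcx]
        nlinarith [mul_lt_mul_of_pos_right h1 hcx,
          mul_le_mul_of_nonneg_left h2 (mul_nonneg (Real.sinh_pos_iff.2 hx0).le hcx.le)]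
      linarith
  exact this

lemma my_phi_lt {c s t : ℝ} (hc : 0 < c) (hs : 0 < s) (hst : s < t) :
    Real.tanh (c * t) / t < Real.tanh (c * s) / s := by
  have h := my_phi_anti (Set.mem_Ioi.2 (mul_pos hc hs)) (Set.mem_Ioi.2 (mul_pos hc (hs.trans hst)))
    (by nlinarith)
  simp only at h
  have hs' : Real.tanh (c * s) / s = c * (Real.tanh (c * s) / (c * s)) := by
    rw [mul_div_assoc', mul_div_mul_left _ _ hc.ne']
  have ht' : Real.tanh (c * t) / t = c * (Real.tanh (c * t) / (c * t)) := by
    rw [mul_div_assoc', mul_div_mul_left _ _ hc.ne']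
  rw [hs', ht']
  exact mul_lt_mul_of_pos_left h hc

lemma my_sqrt_eq {c s : ℝ} (hs : 0 < s) :
    Real.sqrt (s * Real.tanh (c * s)) = s * Real.sqrt (Real.tanh (c * s) / s) := by
  have : s * Real.tanh (c * s) = s ^ 2 * (Real.tanh (c * s) / s) := by
    field_simp
  rw [this, Real.sqrt_mul (sq_nonneg s), Real.sqrt_sq hs.le]

/-- Scalar strict subadditivity of r ↦ √(r tanh(c r)). -/
lemma my_scalar {c a b : ℝ} (hc : 0 < c) (ha : 0 < a) (hb : 0 < b) :
    Real.sqrt ((a + b) * Real.tanh (c * (a + b))) <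
      Real.sqrt (a * Real.tanh (c * a)) + Real.sqrt (b * Real.tanh (c * b)) := by
  have hab : 0 < a + b := by linarith
  rw [my_sqrt_eq hab, my_sqrt_eq ha, my_sqrt_eq hb]
  have k1 : Real.sqrt (Real.tanh (c * (a + b)) / (a + b)) <
      Real.sqrt (Real.tanh (c * a) / a) := by
    apply Real.sqrt_lt_sqrt (div_nonneg (my_tanh_pos (mul_pos hc hab)).le hab.le)
      (my_phi_lt hc ha (by linarith))
  have k2 : Real.sqrt (Real.tanh (c * (a + b)) / (a + b)) <
      Real.sqrt (Real.tanh (c * b) / b) := by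
    apply Real.sqrt_lt_sqrt (div_nonneg (my_tanh_pos (mul_pos hc hab)).le hab.le)
      (my_phi_lt hc hb (by linarith))
  calc (a + b) * Real.sqrt (Real.tanh (c * (a + b)) / (a + b))
      = a * Real.sqrt (Real.tanh (c * (a + b)) / (a + b))
        + b * Real.sqrt (Real.tanh (c * (a + b)) / (a + b)) := by ring
    _ < a * Real.sqrt (Real.tanh (c * a) / a) + b * Real.sqrt (Real.tanh (c * b) / b) :=
        add_lt_add (mul_lt_mul_of_pos_left k1 ha) (mul_lt_mul_of_pos_left k2 hb)

/-- Strict subadditivity of the finite-depth gravity water-wave dispersion function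
`ω(ξ) = √(|ξ| tanh(√μ |ξ|))` on `ℝ^d`. -/
theorem stmt3 (d : ℕ) (hd : 1 ≤ d) (μ : ℝ) (hμ : 0 < μ)
    (ω : EuclideanSpace ℝ (Fin d) → ℝ)
    (hω : ∀ ξ, ω ξ = Real.sqrt (‖ξ‖ * Real.tanh (Real.sqrt μ * ‖ξ‖)))
    (ξ₁ ξ₂ : EuclideanSpace ℝ (Fin d)) (h₁ : ξ₁ ≠ 0) (h₂ : ξ₂ ≠ 0)
    (h₁₂ : ξ₁ + ξ₂ ≠ 0) :
    ω (ξ₁ + ξ₂) < ω ξ₁ + ω ξ₂ := by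
  have hc : 0 < Real.sqrt μ := Real.sqrt_pos.2 hμ
  have ha : 0 < ‖ξ₁‖ := norm_pos_iff.2 h₁
  have hb : 0 < ‖ξ₂‖ := norm_pos_iff.2 h₂
  have hn : ‖ξ₁ + ξ₂‖ ≤ ‖ξ₁‖ + ‖ξ₂‖ := norm_add_le _ _
  rw [hω, hω, hω]
  calc Real.sqrt (‖ξ₁ + ξ₂‖ * Real.tanh (Real.sqrt μ * ‖ξ₁ + ξ₂‖))
      ≤ Real.sqrt ((‖ξ₁‖ + ‖ξ₂‖) * Real.tanh (Real.sqrt μ * (‖ξ₁‖ + ‖ξ₂‖))) := by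
        apply Real.sqrt_le_sqrt
        apply mul_le_mul hn (my_tanh_le_tanh (by nlinarith)) _ (by positivity)
        exact le_of_lt (my_tanh_pos (mul_pos hc (norm_pos_iff.2 h₁₂)))
    _ < _ := my_scalar hc ha hb
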